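/- Every fixed point of the Minkowski question mark function lying in the open interval (0, 1/2) in fact lies in the open interval (2/5, 3/7). -/

import Mathlib

open scoped Classical

noncomputable def gaussMap (x : ℝ) : ℝ := Int.fract x⁻¹

noncomputable def cfDigit (x : ℝ) (n : ℕ) : ℤ := ⌊(gaussMap^[n] x)⁻¹⌋

noncomputable def minkowskiQ (x : ℝ) : ℝ :=
  ∑' k : ℕ, if ∀ i ≤ k, 0 < cfDigit x i then
      (-1 : ℝ) ^ k / (2 : ℝ) ^ ((∑ i ∈ Finset.range (k + 1), cfDigit x i) - 1)
    else 0

noncomputable def qTerm (x : ℝ) (k : ℕ) : ℝ :=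
  if ∀ i ≤ k, 0 < cfDigit x i then
      (-1 : ℝ) ^ k / (2 : ℝ) ^ ((∑ i ∈ Finset.range (k + 1), cfDigit x i) - 1)
    else 0

lemma minkowskiQ_eq (x : ℝ) : minkowskiQ x = ∑' k, qTerm x k := rfl

lemma gm_mem (x : ℝ) : gaussMap x ∈ Set.Ico (0:ℝ) 1 :=
  ⟨Int.fract_nonneg _, Int.fract_lt_one _⟩

lemma iter_mem {x : ℝ} (hx : x ∈ Set.Ico (0:ℝ) 1) (n : ℕ) :
    gaussMap^[n] x ∈ Set.Ico (0:ℝ) 1 := by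
  cases n with
  | zero => exact hx
  | succ n => rw [Function.iterate_succ_apply']; exact gm_mem _

lemma gaussMap_zero : gaussMap 0 = 0 := by simp [gaussMap]

lemma iter_zero_mono {x : ℝ} {i j : ℕ} (hij : i ≤ j) (h : gaussMap^[i] x = 0) :
    gaussMap^[j] x = 0 := by
  obtain ⟨k, rfl⟩ := Nat.exists_eq_add_of_le hij
  rw [add_comm, Function.iterate_add_apply, h]
  induction k with
  | zero => rfl
  | succ k ih =>
    rw [Function.iterate_succ_apply', ih (Nat.le_add_right _ _), gaussMap_zero]

lemma cfDigit_pos_iff {x : ℝ} (hx : x ∈ Set.Ico (0:ℝ) 1) (k : ℕ) :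
    0 < cfDigit x k ↔ gaussMap^[k] x ≠ 0 := by
  obtain ⟨h0, h1⟩ := iter_mem hx k
  unfold cfDigit
  constructor
  · intro h hz
    rw [hz] at h; simp at h
  · intro h
    have hpos : 0 < gaussMap^[k] x := lt_of_le_of_ne h0 (Ne.symm h)
    have h2 : (1:ℝ) ≤ (gaussMap^[k] x)⁻¹ := by
      rw [le_inv_comm₀ one_pos hpos]; simpa using h1.le
    have := Int.le_floor.2 (by exact_mod_cast h2 : ((1:ℤ):ℝ) ≤ (gaussMap^[k] x)⁻¹)
    omega

lemma cond_iff {x : ℝ} (hx : x ∈ Set.Ico (0:ℝ) 1) (k : ℕ) :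
    (∀ i ≤ k, 0 < cfDigit x i) ↔ 0 < cfDigit x k := by
  constructor
  · exact fun h => h k le_rfl
  · intro h i hik
    rw [cfDigit_pos_iff hx] at h ⊢
    exact fun hz => h (iter_zero_mono hik hz)

lemma cfDigit_shift (x : ℝ) (n : ℕ) : cfDigit x (n + 1) = cfDigit (gaussMap x) n := by
  simp [cfDigit, Function.iterate_succ_apply]

lemma cfDigit_zero_pos {x : ℝ} (hx : x ∈ Set.Ioo (0:ℝ) 1) : 1 ≤ cfDigit x 0 := by
  have h2 : (1:ℝ) ≤ x⁻¹ := by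
    rw [le_inv_comm₀ one_pos hx.1]; simpa using hx.2.le
  exact Int.le_floor.2 (by exact_mod_cast h2)

lemma sum_ge {x : ℝ} (hx : x ∈ Set.Ico (0:ℝ) 1) {k : ℕ}
    (h : ∀ i ≤ k, 0 < cfDigit x i) :
    (k : ℤ) + 1 ≤ ∑ i ∈ Finset.range (k + 1), cfDigit x i := by
  calc (k : ℤ) + 1 = ∑ i ∈ Finset.range (k+1), 1 := by simp
  _ ≤ _ := Finset.sum_le_sum fun i hi => h i (by simpa using Nat.lt_succ_iff.1 (Finset.mem_range.1 hi))

lemma qTerm_abs_le {x : ℝ} (hx : x ∈ Set.Ico (0:ℝ) 1) (k : ℕ) :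
    |qTerm x k| ≤ (1/2) ^ k := by
  unfold qTerm
  split
  · rename_i h
    have hs := sum_ge hx h
    rw [abs_div, abs_pow, abs_neg, abs_one, one_pow,
      abs_of_pos (zpow_pos two_pos _)]
    rw [one_div, div_eq_mul_inv, one_mul, ← zpow_neg, inv_pow, ← zpow_natCast, ← zpow_neg]
    apply zpow_le_zpow_right₀ one_le_two
    omega
  · simp

lemma qSummable (x : ℝ) (hx : x ∈ Set.Ico (0:ℝ) 1) : Summable (qTerm x) := by
  apply Summable.of_abs
  apply Summable.of_nonneg_of_le (fun k => abs_nonneg _) (qTerm_abs_le hx)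
  exact summable_geometric_of_lt_one (by norm_num) (by norm_num)

lemma qTerm_zero {x : ℝ} (hx : x ∈ Set.Ioo (0:ℝ) 1) :
    qTerm x 0 = (2:ℝ) ^ (1 - cfDigit x 0) := by
  have h1 := cfDigit_zero_pos hx
  unfold qTerm
  rw [if_pos (by intro i hi; interval_cases i; omega)]
  simp only [pow_zero, zero_add, Finset.range_one, Finset.sum_singleton]
  rw [one_div, ← zpow_neg, neg_sub]

lemma qTerm_shift {x : ℝ} (hx : x ∈ Set.Ioo (0:ℝ) 1) (k : ℕ) :
    qTerm x (k + 1) = -((2:ℝ) ^ (-(cfDigit x 0)) * qTerm (gaussMap x) k) := by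
  have h1 := cfDigit_zero_pos hx
  have hcond : (∀ i ≤ k + 1, 0 < cfDigit x i) ↔ (∀ i ≤ k, 0 < cfDigit (gaussMap x) i) := by
    constructor
    · intro h i hik
      rw [← cfDigit_shift]; exact h (i+1) (by omega)
    · intro h i hik
      cases i with
      | zero => omega
      | succ j => rw [cfDigit_shift]; exact h j (by omega)
  have hsum : ∑ i ∈ Finset.range (k + 1 + 1), cfDigit x i
      = cfDigit x 0 + ∑ i ∈ Finset.range (k + 1), cfDigit (gaussMap x) i := by
    rw [Finset.sum_range_succ' (cfDigit x) (k+1)]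
    simp only [cfDigit_shift]
    ring
  unfold qTerm
  by_cases h : ∀ i ≤ k, 0 < cfDigit (gaussMap x) i
  · rw [if_pos (hcond.2 h), if_pos h, hsum]
    have : cfDigit x 0 + ∑ i ∈ Finset.range (k + 1), cfDigit (gaussMap x) i - 1
        = cfDigit x 0 + (∑ i ∈ Finset.range (k + 1), cfDigit (gaussMap x) i - 1) := by ring
    rw [this, zpow_add₀ (two_ne_zero), pow_succ]
    field_simp
    rw [← zpow_add₀ (two_ne_zero), add_neg_cancel, zpow_zero]
  · rw [if_neg (fun hc => h (hcond.1 hc)), if_neg h, mul_zero, neg_zero]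

lemma funEq {x : ℝ} (hx : x ∈ Set.Ioo (0:ℝ) 1) :
    minkowskiQ x = (2:ℝ) ^ (1 - cfDigit x 0)
      - (2:ℝ) ^ (-(cfDigit x 0)) * minkowskiQ (gaussMap x) := by
  have hIco : x ∈ Set.Ico (0:ℝ) 1 := ⟨hx.1.le, hx.2⟩
  rw [minkowskiQ_eq, (qSummable x hIco).tsum_eq_zero_add, qTerm_zero hx]
  congr 1
  have : ∀ k : ℕ, qTerm x (k+1) = -((2:ℝ) ^ (-(cfDigit x 0))) * qTerm (gaussMap x) k := by
    intro k; rw [qTerm_shift hx k]; ring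
  rw [tsum_congr this, tsum_mul_left, minkowskiQ_eq]
  ring

lemma qTerm_even_nonneg {x : ℝ} (k : ℕ) : 0 ≤ qTerm x (2 * k) := by
  unfold qTerm
  split
  · rw [Even.neg_one_pow (even_two_mul k)]
    positivity
  · exact le_refl 0

lemma pair_nonneg {x : ℝ} (hx : x ∈ Set.Ico (0:ℝ) 1) (k : ℕ) :
    0 ≤ qTerm x (2 * k) + qTerm x (2 * k + 1) := by
  by_cases h : ∀ i ≤ 2 * k + 1, 0 < cfDigit x i
  · have h' : ∀ i ≤ 2 * k, 0 < cfDigit x i := fun i hi => h i (by omega)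
    unfold qTerm
    rw [if_pos h, if_pos h']
    rw [Even.neg_one_pow (even_two_mul k), Odd.neg_one_pow ⟨k, by ring⟩]
    have hsum : ∑ i ∈ Finset.range (2 * k + 1 + 1), cfDigit x i
        = (∑ i ∈ Finset.range (2 * k + 1), cfDigit x i) + cfDigit x (2 * k + 1) :=
      Finset.sum_range_succ _ _
    have hd := h (2 * k + 1) le_rfl
    have hle : (2:ℝ) ^ ((∑ i ∈ Finset.range (2 * k + 1), cfDigit x i) - 1)
        ≤ (2:ℝ) ^ ((∑ i ∈ Finset.range (2 * k + 1 + 1), cfDigit x i) - 1) := by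
      apply zpow_le_zpow_right₀ one_le_two
      omega
    have hp : (0:ℝ) < (2:ℝ) ^ ((∑ i ∈ Finset.range (2 * k + 1), cfDigit x i) - 1) :=
      zpow_pos two_pos _
    have := one_div_le_one_div_of_le hp hle
    rw [neg_div]
    linarith
  · rw [show qTerm x (2 * k + 1) = 0 from if_neg h, add_zero]
    exact qTerm_even_nonneg k

lemma q_nonneg {x : ℝ} (hx : x ∈ Set.Ico (0:ℝ) 1) : 0 ≤ minkowskiQ x := by
  have hs := qSummable x hx
  have he : Summable (fun k => qTerm x (2 * k)) :=
    hs.comp_injective (fun a b hab => by omega)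
  have ho : Summable (fun k => qTerm x (2 * k + 1)) :=
    hs.comp_injective (fun a b hab => by omega)
  rw [minkowskiQ_eq, ← tsum_even_add_odd he ho, ← he.tsum_add ho]
  exact tsum_nonneg fun k => pair_nonneg hx k

lemma cfDigit_zero_def (x : ℝ) : cfDigit x 0 = ⌊x⁻¹⌋ := by simp [cfDigit]

lemma gaussMap_eq (x : ℝ) : gaussMap x = x⁻¹ - cfDigit x 0 := by
  unfold gaussMap cfDigit Int.fract
  simp

lemma minkowskiQ_zero : minkowskiQ 0 = 0 := by
  rw [minkowskiQ_eq]
  convert tsum_zero with k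
  unfold qTerm
  rw [if_neg]
  intro h
  have := h 0 (Nat.zero_le _)
  rw [cfDigit_zero_def] at this
  norm_num at this

lemma q_le {x : ℝ} (hx : x ∈ Set.Ioo (0:ℝ) 1) :
    minkowskiQ x ≤ (2:ℝ) ^ (1 - cfDigit x 0) := by
  rw [funEq hx]
  have h1 : (0:ℝ) ≤ (2:ℝ) ^ (-(cfDigit x 0)) := (zpow_pos two_pos _).le
  have h2 := q_nonneg (gm_mem x)
  nlinarith

lemma q_le_one {x : ℝ} (hx : x ∈ Set.Ico (0:ℝ) 1) : minkowskiQ x ≤ 1 := by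
  rcases eq_or_lt_of_le hx.1 with h | h
  · rw [← h, minkowskiQ_zero]; norm_num
  · have hIoo : x ∈ Set.Ioo (0:ℝ) 1 := ⟨h, hx.2⟩
    have h1 := cfDigit_zero_pos hIoo
    have := zpow_le_zpow_right₀ (one_le_two : (1:ℝ) ≤ 2) (show 1 - cfDigit x 0 ≤ 0 by omega)
    calc minkowskiQ x ≤ (2:ℝ) ^ (1 - cfDigit x 0) := q_le hIoo
      _ ≤ (2:ℝ) ^ (0:ℤ) := this
      _ = 1 := by norm_num

lemma q_ge {x : ℝ} (hx : x ∈ Set.Ioo (0:ℝ) 1) :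
    (2:ℝ) ^ (-(cfDigit x 0)) ≤ minkowskiQ x := by
  rw [funEq hx]
  have h1 : (0:ℝ) < (2:ℝ) ^ (-(cfDigit x 0)) := zpow_pos two_pos _
  have h2 := q_le_one (gm_mem x)
  have h3 : (2:ℝ) ^ (1 - cfDigit x 0) = 2 * (2:ℝ) ^ (-(cfDigit x 0)) := by
    rw [show (1 : ℤ) - cfDigit x 0 = 1 + -(cfDigit x 0) by ring, zpow_add₀ two_ne_zero, zpow_one]
  nlinarith

lemma pow_lb1 (n : ℕ) : n + 4 ≤ 2 ^ (n + 2) := by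
  induction n with
  | zero => norm_num
  | succ n ih =>
    have : 2 ^ (n + 2) ≥ 1 := Nat.one_le_two_pow
    calc n + 1 + 4 ≤ 2 ^ (n + 2) + 2 ^ (n + 2) := by omega
      _ = 2 ^ (n + 1 + 2) := by ring

lemma pow_lb2 (n : ℕ) : 2 * n + 11 ≤ 2 ^ (n + 4) := by
  induction n with
  | zero => norm_num
  | succ n ih =>
    have : 2 ^ (n + 4) ≥ 2 := Nat.le_self_pow (by omega) _ |>.trans' (by norm_num)
    calc 2 * (n + 1) + 11 ≤ 2 ^ (n + 4) + 2 ^ (n + 4) := by omega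
      _ = 2 ^ (n + 1 + 4) := by ring

lemma real_lb1 {a : ℤ} (ha : 3 ≤ a) : ((a:ℝ) + 1) * (2:ℝ) ^ (1 - a) ≤ 1 := by
  obtain ⟨n, rfl⟩ : ∃ n : ℕ, a = n + 3 := ⟨(a - 3).toNat, by omega⟩
  have h1 : (1 : ℤ) - ((n:ℤ) + 3) = -((n:ℤ) + 2) := by ring
  rw [h1, zpow_neg, show ((n:ℤ) + 2) = ((n + 2 : ℕ) : ℤ) by push_cast; ring, zpow_natCast]
  rw [mul_inv_le_iff₀ (by positivity), one_mul]
  have h2 : ((n:ℝ) + 4) ≤ 2 ^ (n + 2) := by exact_mod_cast pow_lb1 n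
  push_cast
  linarith

lemma real_lb2 {a : ℤ} (ha : 4 ≤ a) : (2 * (a:ℝ) + 3) * (2:ℝ) ^ (1 - a) ≤ 2 := by
  obtain ⟨n, rfl⟩ : ∃ n : ℕ, a = n + 4 := ⟨(a - 4).toNat, by omega⟩
  have h1 : (1 : ℤ) - ((n:ℤ) + 4) = -((n:ℤ) + 3) := by ring
  rw [h1, zpow_neg, show ((n:ℤ) + 3) = ((n + 3 : ℕ) : ℤ) by push_cast; ring, zpow_natCast]
  rw [mul_inv_le_iff₀ (by positivity)]
  have h2 : ((2 * n + 11 : ℕ) : ℝ) ≤ ((2 ^ (n + 4) : ℕ) : ℝ) := by exact_mod_cast pow_lb2 n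
  have h3 : ((2:ℝ)) ^ (n + 4) = 2 * 2 ^ (n + 3) := by ring
  push_cast at h2 ⊢
  linarith

lemma q_half : minkowskiQ (1/2 : ℝ) = 1/2 := by
  have h1 : cfDigit (1/2 : ℝ) 0 = 2 := by
    rw [cfDigit_zero_def]
    norm_num
  have h2 : gaussMap (1/2 : ℝ) = 0 := by
    unfold gaussMap
    norm_num [Int.fract]
  rw [funEq (by norm_num : (1/2:ℝ) ∈ Set.Ioo (0:ℝ) 1), h1, h2, minkowskiQ_zero]
  norm_num

set_option maxHeartbeats 1000000 in
theorem fixed_points_localization :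
    ∀ x ∈ Set.Ioo (0 : ℝ) (1 / 2), minkowskiQ x = x → x ∈ Set.Ioo (2 / 5 : ℝ) (3 / 7) := by
  intro x hx hfix
  obtain ⟨hx0, hx2⟩ := hx
  have hxIoo : x ∈ Set.Ioo (0:ℝ) 1 := ⟨hx0, by linarith⟩
  have hxx : x * x⁻¹ = 1 := mul_inv_cancel₀ (ne_of_gt hx0)
  set a := cfDigit x 0 with ha
  have hfl : (a:ℝ) ≤ x⁻¹ := by rw [ha, cfDigit_zero_def]; exact Int.floor_le _
  have hfu : x⁻¹ < (a:ℝ) + 1 := by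
    rw [ha, cfDigit_zero_def]; exact Int.lt_floor_add_one _
  have hinv2 : (2:ℝ) < x⁻¹ := by nlinarith
  have ha2 : 2 ≤ a := by
    rw [ha, cfDigit_zero_def]
    exact Int.le_floor.2 (by exact_mod_cast hinv2.le)
  have haeq : a = 2 := by
    by_contra h
    have ha3 : 3 ≤ a := by omega
    have h1 : minkowskiQ x ≤ (2:ℝ) ^ (1 - a) := q_le hxIoo
    have h2 : ((a:ℝ) + 1) * (2:ℝ) ^ (1 - a) ≤ 1 := real_lb1 ha3
    have hxa : 1 < x * ((a:ℝ) + 1) := by nlinarith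
    have hA : (0:ℝ) < (a:ℝ) + 1 := by
      have : (3:ℝ) ≤ (a:ℝ) := by exact_mod_cast ha3
      linarith
    rw [hfix] at h1
    nlinarith [mul_le_mul_of_nonneg_right h1 hA.le]
  have hAx : (a:ℝ) = 2 := by exact_mod_cast haeq
  set y := gaussMap x with hy
  have hyval : y = x⁻¹ - 2 := by
    rw [hy, gaussMap_eq, ← ha, hAx]
  have hy0 : 0 < y := by rw [hyval]; linarith
  have hy1 : y < 1 := by rw [hyval]; linarith [hAx ▸ hfu]
  have hxy : x * (2 + y) = 1 := by rw [hyval]; linear_combination hxx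
  have hyIoo : y ∈ Set.Ioo (0:ℝ) 1 := ⟨hy0, hy1⟩
  have hyy : y * y⁻¹ = 1 := mul_inv_cancel₀ (ne_of_gt hy0)
  have hQy : minkowskiQ y = 2 - 4 * x := by
    have hf := funEq hxIoo
    rw [← ha, haeq, hfix, ← hy] at hf
    norm_num at hf
    linarith
  have hx3 : 1/3 < x := by nlinarith [hAx ▸ hfu]
  set b := cfDigit y 0 with hb
  have hb1 : 1 ≤ b := cfDigit_zero_pos hyIoo
  have hbl : (b:ℝ) ≤ y⁻¹ := by rw [hb, cfDigit_zero_def]; exact Int.floor_le _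
  have hbu : y⁻¹ < (b:ℝ) + 1 := by
    rw [hb, cfDigit_zero_def]; exact Int.lt_floor_add_one _
  have hkey : 1/3 < y ∧ y < 1/2 := by
    rcases eq_or_lt_of_le hb1 with hb1' | hb2
    · -- b = 1 : contradiction
      exfalso
      have hB : ((b:ℝ)) = 1 := by exact_mod_cast hb1'.symm
      rw [hB] at hbl hbu
      have hyhalf : 1/2 < y := by nlinarith
      set z := gaussMap y with hz
      have hzval : z = y⁻¹ - 1 := by
        rw [hz, gaussMap_eq, ← hb, ← hb1']
        norm_num
      have hz0 : 0 < z := by rw [hzval]; nlinarith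
      have hz1 : z < 1 := by rw [hzval]; linarith
      have hzIoo : z ∈ Set.Ioo (0:ℝ) 1 := ⟨hz0, hz1⟩
      have hyz : y * (1 + z) = 1 := by rw [hzval]; linear_combination hyy
      have hQz : minkowskiQ z = 8 * x - 2 := by
        have hf := funEq hyIoo
        rw [← hb, ← hb1', hQy, ← hz] at hf
        norm_num at hf
        linarith
      set c := cfDigit z 0 with hc
      have hc1 : 1 ≤ c := cfDigit_zero_pos hzIoo
      have hcl : (c:ℝ) ≤ z⁻¹ := by rw [hc, cfDigit_zero_def]; exact Int.floor_le _
      have hcu : z⁻¹ < (c:ℝ) + 1 := by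
        rw [hc, cfDigit_zero_def]; exact Int.lt_floor_add_one _
      have hzz : z * z⁻¹ = 1 := mul_inv_cancel₀ (ne_of_gt hz0)
      rcases eq_or_lt_of_le hc1 with hc1' | hc2
      · have hC : ((c:ℝ)) = 1 := by exact_mod_cast hc1'.symm
        rw [hC] at hcu
        have hzhalf : 1/2 < z := by nlinarith
        have h1 : minkowskiQ z ≤ 1 := q_le_one ⟨hz0.le, hz1⟩
        have hylt : y < 2/3 := by nlinarith
        have hxgt : 3/8 < x := by nlinarith
        rw [hQz] at h1
        linarith
      · have hC2 : (2:ℝ) ≤ (c:ℝ) := by exact_mod_cast hc2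
        have h1 : minkowskiQ z ≤ (2:ℝ) ^ (1 - c) := q_le hzIoo
        have h2 : (2:ℝ) ^ (1 - c) ≤ (2:ℝ) ^ (-(1:ℤ)) :=
          zpow_le_zpow_right₀ one_le_two (by omega)
        have e2 : (2:ℝ) ^ (-(1:ℤ)) = 1/2 := by norm_num
        rw [hQz] at h1
        rw [e2] at h2
        linarith
    · rcases eq_or_lt_of_le (by omega : (2:ℤ) ≤ b) with hb2' | hb3
      · -- b = 2
        have hB : ((b:ℝ)) = 2 := by exact_mod_cast hb2'.symm
        rw [hB] at hbl hbu
        have hygt : 1/3 < y := by nlinarith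
        have hyle : y ≤ 1/2 := by nlinarith
        have hyne : y ≠ 1/2 := by
          intro hhalf
          rw [hhalf] at hxy hQy
          rw [q_half] at hQy
          linarith
        exact ⟨hygt, lt_of_le_of_ne hyle hyne⟩
      · rcases eq_or_lt_of_le (by omega : (3:ℤ) ≤ b) with hb3' | hb4
        · -- b = 3 : contradiction
          exfalso
          have hB : ((b:ℝ)) = 3 := by exact_mod_cast hb3'.symm
          rw [hB] at hbl hbu
          have hylt : y ≤ 1/3 := by nlinarith
          have hygt : 1/4 < y := by nlinarith
          set w := gaussMap y with hw
          have hwval : w = y⁻¹ - 3 := by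
            rw [hw, gaussMap_eq, ← hb, ← hb3']
            norm_num
          have hw0 : 0 ≤ w := by rw [hwval]; linarith
          have hw1 : w < 1 := by rw [hwval]; linarith
          have hyw : y * (3 + w) = 1 := by rw [hwval]; linear_combination hyy
          have hQw : minkowskiQ w = 32 * x - 14 := by
            have hf := funEq hyIoo
            rw [← hb, ← hb3', hQy, ← hw] at hf
            norm_num at hf
            linarith
          rcases eq_or_lt_of_le hw0 with hw0' | hwpos
          · rw [← hw0', minkowskiQ_zero] at hQw
            rw [← hw0'] at hyw
            have hx716 : x = 7/16 := by linarith
            have hy13 : y = 1/3 := by linarith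
            rw [hx716, hy13] at hxy
            norm_num at hxy
          · have hwIoo : w ∈ Set.Ioo (0:ℝ) 1 := ⟨hwpos, hw1⟩
            set c := cfDigit w 0 with hc
            have hc1 : 1 ≤ c := cfDigit_zero_pos hwIoo
            have hcl : (c:ℝ) ≤ w⁻¹ := by rw [hc, cfDigit_zero_def]; exact Int.floor_le _
            have hcu : w⁻¹ < (c:ℝ) + 1 := by
              rw [hc, cfDigit_zero_def]; exact Int.lt_floor_add_one _
            have hww : w * w⁻¹ = 1 := mul_inv_cancel₀ (ne_of_gt hwpos)
            have hQwl : (2:ℝ) ^ (-c) ≤ minkowskiQ w := q_ge hwIoo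
            rcases eq_or_lt_of_le hc1 with hc1' | hc2
            · have hC : ((c:ℝ)) = 1 := by exact_mod_cast hc1'.symm
              rw [hC] at hcu
              have hwhalf : 1/2 < w := by nlinarith
              have hpc : (2:ℝ) ^ (-c) = 1/2 := by
                rw [← hc1']; norm_num
              rw [hpc, hQw] at hQwl
              have hy27 : y < 2/7 := by nlinarith
              have hxlt : x < 4/9 := by nlinarith
              linarith
            · have hC2 : (2:ℝ) ≤ (c:ℝ) := by exact_mod_cast hc2
              have hwle : w ≤ 1/2 := by nlinarith
              have hyge : 2/7 ≤ y := by nlinarith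
              have hxle : x ≤ 7/16 := by nlinarith
              have hpos : (0:ℝ) < (2:ℝ) ^ (-c) := zpow_pos two_pos _
              rw [hQw] at hQwl
              linarith
        · -- b ≥ 4 : contradiction
          exfalso
          have hb4' : 4 ≤ b := by omega
          have h1 : minkowskiQ y ≤ (2:ℝ) ^ (1 - b) := q_le hyIoo
          have h2 : (2 * (b:ℝ) + 3) * (2:ℝ) ^ (1 - b) ≤ 2 := real_lb2 hb4'
          have hB4 : (4:ℝ) ≤ (b:ℝ) := by exact_mod_cast hb4'
          have hyb : 1 < y * ((b:ℝ) + 1) := by nlinarith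
          have hxy' : x * y = 1 - 2 * x := by linear_combination hxy
          have h5 : x < x * (y * ((b:ℝ) + 1)) := by nlinarith
          have h5' : x < (1 - 2*x) * ((b:ℝ) + 1) := by
            calc x < x * (y * ((b:ℝ) + 1)) := h5
              _ = (x * y) * ((b:ℝ) + 1) := by ring
              _ = (1 - 2*x) * ((b:ℝ) + 1) := by rw [hxy']
          rw [hQy] at h1
          have key : 2 < (2 - 4*x) * (2 * (b:ℝ) + 3) := by nlinarith
          nlinarith [mul_le_mul_of_nonneg_right h1 (by linarith : (0:ℝ) ≤ 2 * (b:ℝ) + 3)]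
  obtain ⟨hk1, hk2⟩ := hkey
  constructor
  · nlinarith
  · nlinarith
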